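/- For arbitrary rank D ≥ 3, every (possibly disconnected) D-colored graph with finitely many connected components is the boundary of some connected Feynman graph of the melonic quartic model φ⁴_{D,m}; i.e., the boundary sector ∂Feyn_D(φ⁴_m) equals all of ⊔Grph_D. -/

import Mathlib

open scoped Classical

structure PreGraph (D : ℕ) where
  W : Type
  B : Type
  E : Type
  [finW : Finite W]
  [finB : Finite B]
  [finE : Finite E]
  src : E → W
  tgt : E → B
  col : E → Fin D

attribute [instance] PreGraph.finW PreGraph.finB PreGraph.finE

namespace PreGraph

variable {D : ℕ}

/-- A regularly edge-colored bipartite graph: at every white (resp. black) vertex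
there is exactly one incident edge of each of the `D` colors. -/
def Regular (G : PreGraph D) : Prop :=
  (∀ w c, ∃! e, G.src e = w ∧ G.col e = c) ∧
  (∀ b c, ∃! e, G.tgt e = b ∧ G.col e = c)

/-- The simple graph on all the vertices of `G` whose edges are the edges of `G`
with color in `S`. -/
def adjOn (G : PreGraph D) (S : Set (Fin D)) : SimpleGraph (G.W ⊕ G.B) where
  Adj v w := ∃ e, G.col e ∈ S ∧
    ((v = Sum.inl (G.src e) ∧ w = Sum.inr (G.tgt e)) ∨
     (w = Sum.inl (G.src e) ∧ v = Sum.inr (G.tgt e)))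
  symm := by
    constructor
    rintro v w ⟨e, hc, h⟩
    exact ⟨e, hc, h.symm⟩
  loopless := by
    constructor
    rintro v ⟨e, hc, (⟨h1, h2⟩ | ⟨h1, h2⟩)⟩ <;> rw [h1] at h2 <;> exact Sum.inl_ne_inr h2

def Connected (G : PreGraph D) : Prop := (G.adjOn Set.univ).Connected

/-- The number of faces (connected components of the `{i,j}`-bicolored subgraph). -/
noncomputable def facesCount (G : PreGraph D) (i j : Fin D) : ℕ :=
  Nat.card ((G.adjOn {i, j}).ConnectedComponent)

/-- The total number of faces of `G` (over all unordered pairs of colors). -/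
noncomputable def totalFaces (G : PreGraph D) : ℕ :=
  ∑ p ∈ Finset.univ.filter (fun p : Fin D × Fin D => p.1 < p.2), G.facesCount p.1 p.2

/-- Number of faces of the jacket associated to a cyclic permutation `σ` of the colors:
the faces of colors `σ^q(0), σ^{q+1}(0)`. -/
noncomputable def jacketFaces (G : PreGraph (D+1)) (σ : Equiv.Perm (Fin (D+1))) : ℕ :=
  ∑ q ∈ Finset.range (D+1), G.facesCount ((σ ^ q) 0) ((σ ^ (q+1)) 0)

/-- The genus of the jacket ribbon graph associated to `σ`, via Euler's formula
`2 - 2g = V - E + F`. -/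
noncomputable def jacketGenus (G : PreGraph (D+1)) (σ : Equiv.Perm (Fin (D+1))) : ℚ :=
  (2 - ((Nat.card G.W : ℚ) + (Nat.card G.B : ℚ)) + (Nat.card G.E : ℚ)
      - (G.jacketFaces σ : ℚ)) / 2

/-- Gurău's degree: the sum of the genera of the `D!/2` jackets of `G`; each jacket
corresponds to a pair `σ, σ⁻¹` of cyclic permutations of the `D+1` colors, whence the
factor `1/2`. -/
noncomputable def gurauDegree (G : PreGraph (D+1)) : ℚ :=
  (1/2) * ∑ σ ∈ Finset.univ.filter
      (fun σ : Equiv.Perm (Fin (D+1)) => σ.IsCycle ∧ σ.support = Finset.univ),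
    G.jacketGenus σ

end PreGraph

/-- The connected sum `G #_{e,f} K`: delete `e` and `f` and add two new edges
`E = (s(e), t(f))` (coded `true`) and `F = (s(f), t(e))` (coded `false`), both of the
color of `e`. -/
noncomputable def connSum {D : ℕ} (G K : PreGraph D) (e : G.E) (f : K.E) :
    PreGraph D where
  W := G.W ⊕ K.W
  B := G.B ⊕ K.B
  E := {e' : G.E // e' ≠ e} ⊕ ({f' : K.E // f' ≠ f} ⊕ Bool)
  src := fun x => match x with
    | .inl e' => .inl (G.src e'.1)
    | .inr (.inl f') => .inr (K.src f'.1)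
    | .inr (.inr true) => .inl (G.src e)
    | .inr (.inr false) => .inr (K.src f)
  tgt := fun x => match x with
    | .inl e' => .inl (G.tgt e'.1)
    | .inr (.inl f') => .inr (K.tgt f'.1)
    | .inr (.inr true) => .inr (K.tgt f)
    | .inr (.inr false) => .inl (G.tgt e)
  col := fun x => match x with
    | .inl e' => G.col e'.1
    | .inr (.inl f') => K.col f'.1
    | .inr (.inr _) => G.col e
open scoped Classical

/-- The data of an open `(D+1)`-colored graph: bipartite vertex set, edges with a
source (white) and target (black) endpoint, colored by `0,…,D`, together with the
sets of external white/black vertices. -/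
structure OpenPre (D : ℕ) where
  W : Type
  B : Type
  E : Type
  [finW : Finite W]
  [finB : Finite B]
  [finE : Finite E]
  src : E → W
  tgt : E → B
  col : E → Fin (D+1)
  extW : Set W
  extB : Set B

attribute [instance] OpenPre.finW OpenPre.finB OpenPre.finE

namespace OpenPre

variable {D : ℕ}

/-- `G` is an open `(D+1)`-colored graph: internal vertices have exactly one incident
edge of each of the `D+1` colors, external vertices have exactly one incident edge,
which has color `0`. -/
def IsColored (G : OpenPre D) : Prop :=
  (∀ w ∉ G.extW, ∀ c, ∃! e, G.src e = w ∧ G.col e = c) ∧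
  (∀ b ∉ G.extB, ∀ c, ∃! e, G.tgt e = b ∧ G.col e = c) ∧
  (∀ w ∈ G.extW, ∃! e, G.src e = w) ∧
  (∀ b ∈ G.extB, ∃! e, G.tgt e = b) ∧
  (∀ w ∈ G.extW, ∀ e, G.src e = w → G.col e = 0) ∧
  (∀ b ∈ G.extB, ∀ e, G.tgt e = b → G.col e = 0)

/-- The simple graph on the vertices of `G` with the edges of `G` of color in `S`. -/
def adjOn (G : OpenPre D) (S : Set (Fin (D+1))) : SimpleGraph (G.W ⊕ G.B) where
  Adj v w := ∃ e, G.col e ∈ S ∧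
    ((v = Sum.inl (G.src e) ∧ w = Sum.inr (G.tgt e)) ∨
     (w = Sum.inl (G.src e) ∧ v = Sum.inr (G.tgt e)))
  symm := by
    constructor
    rintro v w ⟨e, hc, h⟩
    exact ⟨e, hc, h.symm⟩
  loopless := by
    constructor
    rintro v ⟨e, hc, (⟨h1, h2⟩ | ⟨h1, h2⟩)⟩ <;> rw [h1] at h2 <;> exact Sum.inl_ne_inr h2

def Connected (G : OpenPre D) : Prop := (G.adjOn Set.univ).Connected

/-- Boundary adjacency of color `k ∈ {1,…,D}`: the white vertex `w` and the black
vertex `b` are joined by a `(0,k)`-bicolored path in `G`. -/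
def bAdj (G : OpenPre D) (k : Fin D) (w : G.W) (b : G.B) : Prop :=
  (G.adjOn {0, k.succ}).Reachable (Sum.inl w) (Sum.inr b)

end OpenPre

/-- The local "pillow" configuration: internal vertices `w, w', b, b'` span a quartic
melonic interaction vertex `V_k`: the color-`k` edge at `w` (resp. `w'`) targets `b`
(resp. `b'`), and every other non-`0`-colored edge at `w` (resp. `w'`) targets `b'`
(resp. `b`). -/
def OpenPre.PillowAt {D : ℕ} (G : OpenPre D) (k : Fin (D+1))
    (w w' : G.W) (b b' : G.B) : Prop :=
  w ≠ w' ∧ b ≠ b' ∧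
  (∀ e, G.src e = w →
    (G.col e = k → G.tgt e = b) ∧ (G.col e ≠ 0 → G.col e ≠ k → G.tgt e = b')) ∧
  (∀ e, G.src e = w' →
    (G.col e = k → G.tgt e = b') ∧ (G.col e ≠ 0 → G.col e ≠ k → G.tgt e = b))

/-- `G` is a Feynman graph of the quartic melonic model `φ⁴_{D,m}`: it is an open
`(D+1)`-colored graph, each internal vertex belongs to a pillow interaction vertex
`V_k` (for some color `k ≠ 0`), and there is at least one internal `0`-colored
(propagator) edge. -/
def OpenPre.IsQuarticFeyn {D : ℕ} (G : OpenPre D) : Prop :=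
  G.IsColored ∧
  (∀ w : G.W, w ∉ G.extW → ∃ (k : Fin (D+1)) (w' : G.W) (b b' : G.B),
    k ≠ 0 ∧ G.PillowAt k w w' b b') ∧
  (∃ e, G.col e = 0 ∧ G.src e ∉ G.extW ∧ G.tgt e ∉ G.extB)

/-- The boundary graph of the open graph `G` is isomorphic to the closed `D`-colored
graph `B`: bijections between the external legs of `G` and the vertices of `B`,
matching the `(0,k)`-bicolored paths of `G` with the `k`-colored edges of `B`. -/
def OpenPre.BoundaryIso {D : ℕ} (G : OpenPre D) (B : PreGraph D) : Prop :=
  ∃ (fw : {x // x ∈ G.extW} ≃ B.W) (fb : {y // y ∈ G.extB} ≃ B.B),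
    ∀ (w : {x // x ∈ G.extW}) (b : {y // y ∈ G.extB}) (k : Fin D),
      G.bAdj k w.1 b.1 ↔ ∃ e, B.src e = fw w ∧ B.tgt e = fb b ∧ B.col e = k

section AuxMelonic

variable {D : ℕ} (B : PreGraph D)

/-- The unique edge of `B` with source `w` and color `c`. -/
noncomputable def aE (h : B.Regular) (w : B.W) (c : Fin D) : B.E :=
  (h.1 w c).choose

lemma aE_src (h : B.Regular) (w : B.W) (c : Fin D) : B.src (aE B h w c) = w :=
  (h.1 w c).choose_spec.1.1

lemma aE_col (h : B.Regular) (w : B.W) (c : Fin D) : B.col (aE B h w c) = c :=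
  (h.1 w c).choose_spec.1.2

lemma eq_aE (h : B.Regular) {e : B.E} {w : B.W} {c : Fin D}
    (h1 : B.src e = w) (h2 : B.col e = c) : e = aE B h w c :=
  (h.1 w c).choose_spec.2 e ⟨h1, h2⟩

lemma aE_self (h : B.Regular) (e : B.E) : aE B h (B.src e) (B.col e) = e :=
  (eq_aE B h rfl rfl).symm

/-- The unique edge of `B` with target `b` and color `c`. -/
noncomputable def rE (h : B.Regular) (b : B.B) (c : Fin D) : B.E :=
  (h.2 b c).choose

lemma rE_tgt (h : B.Regular) (b : B.B) (c : Fin D) : B.tgt (rE B h b c) = b :=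
  (h.2 b c).choose_spec.1.1

lemma rE_col (h : B.Regular) (b : B.B) (c : Fin D) : B.col (rE B h b c) = c :=
  (h.2 b c).choose_spec.1.2

lemma eq_rE (h : B.Regular) {e : B.E} {b : B.B} {c : Fin D}
    (h1 : B.tgt e = b) (h2 : B.col e = c) : e = rE B h b c :=
  (h.2 b c).choose_spec.2 e ⟨h1, h2⟩

lemma rE_self (h : B.Regular) (e : B.E) : rE B h (B.tgt e) (B.col e) = e :=
  (eq_rE B h rfl rfl).symm

/-- The bijection sending a white vertex to the target of its color-0 edge. -/
noncomputable def psiWB (h : B.Regular) (hD0 : 0 < D) : B.W ≃ B.B where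
  toFun w := B.tgt (aE B h w ⟨0, hD0⟩)
  invFun b := B.src (rE B h b ⟨0, hD0⟩)
  left_inv w := by
    show B.src (rE B h (B.tgt (aE B h w ⟨0, hD0⟩)) ⟨0, hD0⟩) = w
    have h1 : rE B h (B.tgt (aE B h w ⟨0, hD0⟩)) ⟨0, hD0⟩ = aE B h w ⟨0, hD0⟩ :=
      (eq_rE B h rfl (aE_col B h w _)).symm
    rw [h1, aE_src]
  right_inv b := by
    show B.tgt (aE B h (B.src (rE B h b ⟨0, hD0⟩)) ⟨0, hD0⟩) = b
    have h1 : aE B h (B.src (rE B h b ⟨0, hD0⟩)) ⟨0, hD0⟩ = rE B h b ⟨0, hD0⟩ :=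
      (eq_aE B h rfl (rE_col B h b _)).symm
    rw [h1, rE_tgt]

/-- The main construction: the connected quartic-melonic Feynman graph whose boundary
is `B`.  One pillow per edge of `B`, with splitter chains at white vertices of `B` and
merger chains at black vertices. -/
noncomputable def mG (h : B.Regular) (φ : B.W ≃ B.B) (hD0 : 0 < D) : OpenPre D where
  W := B.W ⊕ (B.E × Bool)
  B := B.B ⊕ (B.E × Bool)
  E := (B.E × Bool × Fin D) ⊕ (B.W ⊕ (B.E ⊕ B.E))
  src := fun x => match x with
    | .inl (e, s, _) => .inr (e, s)
    | .inr (.inl w) => .inl w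
    | .inr (.inr (.inl e)) => .inr (e, false)
    | .inr (.inr (.inr e)) => .inr (e, true)
  tgt := fun x => match x with
    | .inl (e, s, c) => .inr (e, if c = B.col e then s else !s)
    | .inr (.inl w) => .inr (aE B h w ⟨0, hD0⟩, true)
    | .inr (.inr (.inl e)) =>
        if hc : (B.col e).val + 1 < D then .inr (aE B h (B.src e) ⟨(B.col e).val + 1, hc⟩, true)
        else .inr (rE B h (φ (B.src e)) ⟨0, hD0⟩, false)
    | .inr (.inr (.inr e)) =>
        if hc : (B.col e).val + 1 < D then .inr (rE B h (B.tgt e) ⟨(B.col e).val + 1, hc⟩, false)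
        else .inl (B.tgt e)
  col := fun x => match x with
    | .inl (_, _, c) => c.succ
    | .inr _ => 0
  extW := Set.range Sum.inl
  extB := Set.range Sum.inl

attribute [reducible] mG

end AuxMelonic
section AuxMelonic2

variable {D : ℕ} (B : PreGraph D) (h : B.Regular) (φ : B.W ≃ B.B) (hD0 : 0 < D)

lemma mG_src_pil (e : B.E) (s : Bool) (c : Fin D) :
    (mG B h φ hD0).src (.inl (e, s, c)) = .inr (e, s) := rfl
lemma mG_src_ext (w : B.W) : (mG B h φ hD0).src (.inr (.inl w)) = .inl w := rfl
lemma mG_src_spl (e : B.E) : (mG B h φ hD0).src (.inr (.inr (.inl e))) = .inr (e, false) := rfl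
lemma mG_src_mer (e : B.E) : (mG B h φ hD0).src (.inr (.inr (.inr e))) = .inr (e, true) := rfl

lemma mG_col_pil (e : B.E) (s : Bool) (c : Fin D) :
    (mG B h φ hD0).col (.inl (e, s, c)) = c.succ := rfl
lemma mG_col_ext (w : B.W) : (mG B h φ hD0).col (.inr (.inl w)) = 0 := rfl
lemma mG_col_spl (e : B.E) : (mG B h φ hD0).col (.inr (.inr (.inl e))) = 0 := rfl
lemma mG_col_mer (e : B.E) : (mG B h φ hD0).col (.inr (.inr (.inr e))) = 0 := rfl

lemma mG_tgt_pil (e : B.E) (s : Bool) (c : Fin D) :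
    (mG B h φ hD0).tgt (.inl (e, s, c)) = .inr (e, if c = B.col e then s else !s) := rfl
lemma mG_tgt_ext (w : B.W) :
    (mG B h φ hD0).tgt (.inr (.inl w)) = .inr (aE B h w ⟨0, hD0⟩, true) := rfl
lemma mG_tgt_spl_pos (e : B.E) (hc : (B.col e).val + 1 < D) :
    (mG B h φ hD0).tgt (.inr (.inr (.inl e)))
      = .inr (aE B h (B.src e) ⟨(B.col e).val + 1, hc⟩, true) := dif_pos hc
lemma mG_tgt_spl_neg (e : B.E) (hc : ¬ ((B.col e).val + 1 < D)) :
    (mG B h φ hD0).tgt (.inr (.inr (.inl e)))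
      = .inr (rE B h (φ (B.src e)) ⟨0, hD0⟩, false) := dif_neg hc
lemma mG_tgt_mer_pos (e : B.E) (hc : (B.col e).val + 1 < D) :
    (mG B h φ hD0).tgt (.inr (.inr (.inr e)))
      = .inr (rE B h (B.tgt e) ⟨(B.col e).val + 1, hc⟩, false) := dif_pos hc
lemma mG_tgt_mer_neg (e : B.E) (hc : ¬ ((B.col e).val + 1 < D)) :
    (mG B h φ hD0).tgt (.inr (.inr (.inr e))) = .inl (B.tgt e) := dif_neg hc

lemma mG_extW_eq : (mG B h φ hD0).extW = Set.range Sum.inl := rfl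
lemma mG_extB_eq : (mG B h φ hD0).extB = Set.range Sum.inl := rfl

lemma mG_inr_not_extW (p : B.E × Bool) : Sum.inr p ∉ (mG B h φ hD0).extW := by
  rw [mG_extW_eq]; rintro ⟨w, hw⟩; exact nomatch hw
lemma mG_inr_not_extB (p : B.E × Bool) : Sum.inr p ∉ (mG B h φ hD0).extB := by
  rw [mG_extB_eq]; rintro ⟨w, hw⟩; exact nomatch hw
lemma mG_inl_extW (w : B.W) : Sum.inl w ∈ (mG B h φ hD0).extW := ⟨w, rfl⟩
lemma mG_inl_extB (b : B.B) : Sum.inl b ∈ (mG B h φ hD0).extB := ⟨b, rfl⟩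

/-- Unique edge at each internal white vertex, per color. -/
lemma mG_int_white (e : B.E) (s : Bool) (c : Fin (D+1)) :
    ∃! ed, (mG B h φ hD0).src ed = Sum.inr (e, s) ∧ (mG B h φ hD0).col ed = c := by
  induction c using Fin.cases with
  | zero =>
    cases s with
    | false =>
      refine ⟨.inr (.inr (.inl e)), ⟨rfl, rfl⟩, ?_⟩
      rintro (⟨e', s', c'⟩ | w' | e' | e') ⟨hs, hc⟩
      · exact absurd hc.symm (Fin.succ_ne_zero c').symm
      · rw [mG_src_ext] at hs; exact nomatch hs
      · rw [mG_src_spl, Sum.inr.injEq, Prod.mk.injEq] at hs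
        rw [hs.1]
      · rw [mG_src_mer, Sum.inr.injEq, Prod.mk.injEq] at hs
        exact absurd hs.2 (by simp)
    | true =>
      refine ⟨.inr (.inr (.inr e)), ⟨rfl, rfl⟩, ?_⟩
      rintro (⟨e', s', c'⟩ | w' | e' | e') ⟨hs, hc⟩
      · exact absurd hc.symm (Fin.succ_ne_zero c').symm
      · rw [mG_src_ext] at hs; exact nomatch hs
      · rw [mG_src_spl, Sum.inr.injEq, Prod.mk.injEq] at hs
        exact absurd hs.2 (by simp)
      · rw [mG_src_mer, Sum.inr.injEq, Prod.mk.injEq] at hs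
        rw [hs.1]
  | succ c =>
    refine ⟨.inl (e, s, c), ⟨rfl, rfl⟩, ?_⟩
    rintro (⟨e', s', c'⟩ | w' | e' | e') ⟨hs, hc⟩
    · rw [mG_col_pil] at hc
      have hcc : c' = c := Fin.succ_injective _ hc
      rw [mG_src_pil, Sum.inr.injEq, Prod.mk.injEq] at hs
      rw [hs.1, hs.2, hcc]
    · exact absurd hc.symm (Fin.succ_ne_zero c)
    · exact absurd hc.symm (Fin.succ_ne_zero c)
    · exact absurd hc.symm (Fin.succ_ne_zero c)

end AuxMelonic2
section AuxMelonic3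

variable {D : ℕ} (B : PreGraph D) (h : B.Regular) (φ : B.W ≃ B.B) (hD0 : 0 < D)

/-- Unique edge at each internal black vertex, per color. -/
lemma mG_int_black (e : B.E) (t : Bool) (c : Fin (D+1)) :
    ∃! ed, (mG B h φ hD0).tgt ed = Sum.inr (e, t) ∧ (mG B h φ hD0).col ed = c := by
  induction c using Fin.cases with
  | zero =>
    cases t with
    | true =>
      by_cases h0 : (B.col e).val = 0
      · refine ⟨.inr (.inl (B.src e)), ⟨?_, rfl⟩, ?_⟩
        · rw [mG_tgt_ext, Sum.inr.injEq, Prod.mk.injEq]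
          exact ⟨(eq_aE B h rfl (Fin.ext h0)).symm, rfl⟩
        · rintro (⟨e', s', c'⟩ | w' | e' | e') ⟨ht, hc⟩
          · exact absurd hc (Fin.succ_ne_zero c')
          · rw [mG_tgt_ext, Sum.inr.injEq, Prod.mk.injEq] at ht
            have hw : w' = B.src e := by rw [← ht.1, aE_src]
            rw [hw]
          · by_cases hc' : (B.col e').val + 1 < D
            · rw [mG_tgt_spl_pos B h φ hD0 e' hc', Sum.inr.injEq, Prod.mk.injEq] at ht
              have : (B.col e).val = (B.col e').val + 1 := by rw [← ht.1, aE_col]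
              omega
            · rw [mG_tgt_spl_neg B h φ hD0 e' hc', Sum.inr.injEq, Prod.mk.injEq] at ht
              exact absurd ht.2 (by simp)
          · by_cases hc' : (B.col e').val + 1 < D
            · rw [mG_tgt_mer_pos B h φ hD0 e' hc', Sum.inr.injEq, Prod.mk.injEq] at ht
              exact absurd ht.2 (by simp)
            · rw [mG_tgt_mer_neg B h φ hD0 e' hc'] at ht
              exact nomatch ht
      · refine ⟨.inr (.inr (.inl (aE B h (B.src e) ⟨(B.col e).val - 1, by omega⟩))), ⟨?_, rfl⟩, ?_⟩
        · have hcX : (B.col (aE B h (B.src e) ⟨(B.col e).val - 1, by omega⟩)).val + 1 < D := by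
            rw [aE_col]
            have := (B.col e).isLt
            show (B.col e).val - 1 + 1 < D
            omega
          rw [mG_tgt_spl_pos B h φ hD0 _ hcX, Sum.inr.injEq, Prod.mk.injEq]
          refine ⟨(eq_aE B h (aE_src B h _ _).symm (Fin.ext ?_)).symm, rfl⟩
          simp only [aE_col]
          omega
        · rintro (⟨e', s', c'⟩ | w' | e' | e') ⟨ht, hc⟩
          · exact absurd hc (Fin.succ_ne_zero c')
          · rw [mG_tgt_ext, Sum.inr.injEq, Prod.mk.injEq] at ht
            have : (B.col e).val = 0 := by rw [← ht.1, aE_col]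
            exact absurd this h0
          · by_cases hc' : (B.col e').val + 1 < D
            · rw [mG_tgt_spl_pos B h φ hD0 e' hc', Sum.inr.injEq, Prod.mk.injEq] at ht
              have hsrc : B.src e = B.src e' := by rw [← ht.1, aE_src]
              have hcol : (B.col e).val = (B.col e').val + 1 := by rw [← ht.1, aE_col]
              have : e' = aE B h (B.src e) ⟨(B.col e).val - 1, by omega⟩ :=
                eq_aE B h hsrc.symm (Fin.ext (show (B.col e').val = (B.col e).val - 1 by omega))
              rw [this]
            · rw [mG_tgt_spl_neg B h φ hD0 e' hc', Sum.inr.injEq, Prod.mk.injEq] at ht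
              exact absurd ht.2 (by simp)
          · by_cases hc' : (B.col e').val + 1 < D
            · rw [mG_tgt_mer_pos B h φ hD0 e' hc', Sum.inr.injEq, Prod.mk.injEq] at ht
              exact absurd ht.2 (by simp)
            · rw [mG_tgt_mer_neg B h φ hD0 e' hc'] at ht
              exact nomatch ht
    | false =>
      by_cases h0 : (B.col e).val = 0
      · refine ⟨.inr (.inr (.inl (aE B h (φ.symm (B.tgt e)) ⟨D - 1, by omega⟩))), ⟨?_, rfl⟩, ?_⟩
        · have hcX : ¬ ((B.col (aE B h (φ.symm (B.tgt e)) ⟨D - 1, by omega⟩)).val + 1 < D) := by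
            rw [aE_col]; simp only []; omega
          rw [mG_tgt_spl_neg B h φ hD0 _ hcX, Sum.inr.injEq, Prod.mk.injEq]
          refine ⟨?_, rfl⟩
          rw [aE_src, Equiv.apply_symm_apply]
          exact (eq_rE B h rfl (Fin.ext h0)).symm
        · rintro (⟨e', s', c'⟩ | w' | e' | e') ⟨ht, hc⟩
          · exact absurd hc (Fin.succ_ne_zero c')
          · rw [mG_tgt_ext, Sum.inr.injEq, Prod.mk.injEq] at ht
            exact absurd ht.2 (by simp)
          · by_cases hc' : (B.col e').val + 1 < D
            · rw [mG_tgt_spl_pos B h φ hD0 e' hc', Sum.inr.injEq, Prod.mk.injEq] at ht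
              exact absurd ht.2 (by simp)
            · rw [mG_tgt_spl_neg B h φ hD0 e' hc', Sum.inr.injEq, Prod.mk.injEq] at ht
              have htg : B.tgt e = φ (B.src e') := by rw [← ht.1, rE_tgt]
              have : e' = aE B h (φ.symm (B.tgt e)) ⟨D - 1, by omega⟩ := by
                refine eq_aE B h ?_ (Fin.ext ?_)
                · rw [htg, Equiv.symm_apply_apply]
                · simp only []; omega
              rw [this]
          · by_cases hc' : (B.col e').val + 1 < D
            · rw [mG_tgt_mer_pos B h φ hD0 e' hc', Sum.inr.injEq, Prod.mk.injEq] at ht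
              have : (B.col e).val = (B.col e').val + 1 := by rw [← ht.1, rE_col]
              omega
            · rw [mG_tgt_mer_neg B h φ hD0 e' hc'] at ht
              exact nomatch ht
      · refine ⟨.inr (.inr (.inr (rE B h (B.tgt e) ⟨(B.col e).val - 1, by omega⟩))), ⟨?_, rfl⟩, ?_⟩
        · have hcX : (B.col (rE B h (B.tgt e) ⟨(B.col e).val - 1, by omega⟩)).val + 1 < D := by
            rw [rE_col]
            have := (B.col e).isLt
            show (B.col e).val - 1 + 1 < D
            omega
          rw [mG_tgt_mer_pos B h φ hD0 _ hcX, Sum.inr.injEq, Prod.mk.injEq]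
          refine ⟨(eq_rE B h (rE_tgt B h _ _).symm (Fin.ext ?_)).symm, rfl⟩
          simp only [rE_col]
          omega
        · rintro (⟨e', s', c'⟩ | w' | e' | e') ⟨ht, hc⟩
          · exact absurd hc (Fin.succ_ne_zero c')
          · rw [mG_tgt_ext, Sum.inr.injEq, Prod.mk.injEq] at ht
            exact absurd ht.2 (by simp)
          · by_cases hc' : (B.col e').val + 1 < D
            · rw [mG_tgt_spl_pos B h φ hD0 e' hc', Sum.inr.injEq, Prod.mk.injEq] at ht
              exact absurd ht.2 (by simp)
            · rw [mG_tgt_spl_neg B h φ hD0 e' hc', Sum.inr.injEq, Prod.mk.injEq] at ht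
              have : (B.col e).val = 0 := by rw [← ht.1, rE_col]
              exact absurd this h0
          · by_cases hc' : (B.col e').val + 1 < D
            · rw [mG_tgt_mer_pos B h φ hD0 e' hc', Sum.inr.injEq, Prod.mk.injEq] at ht
              have htg : B.tgt e = B.tgt e' := by rw [← ht.1, rE_tgt]
              have hcol : (B.col e).val = (B.col e').val + 1 := by rw [← ht.1, rE_col]
              have : e' = rE B h (B.tgt e) ⟨(B.col e).val - 1, by omega⟩ :=
                eq_rE B h htg.symm (Fin.ext (show (B.col e').val = (B.col e).val - 1 by omega))
              rw [this]
            · rw [mG_tgt_mer_neg B h φ hD0 e' hc'] at ht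
              exact nomatch ht
  | succ c =>
    refine ⟨.inl (e, if c = B.col e then t else !t, c), ⟨?_, rfl⟩, ?_⟩
    · rw [mG_tgt_pil, Sum.inr.injEq, Prod.mk.injEq]
      refine ⟨rfl, ?_⟩
      by_cases hce : c = B.col e <;> simp [hce]
    · rintro (⟨e', s', c'⟩ | w' | e' | e') ⟨ht, hc⟩
      · rw [mG_col_pil] at hc
        have hcc : c' = c := Fin.succ_injective _ hc
        subst hcc
        rw [mG_tgt_pil, Sum.inr.injEq, Prod.mk.injEq] at ht
        obtain ⟨rfl, ht2⟩ := ht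
        have : s' = if c' = B.col e' then t else !t := by
          by_cases hce : c' = B.col e' <;> simp [hce] at ht2 ⊢ <;> simp [← ht2]
        rw [this]
      · exact absurd hc.symm (Fin.succ_ne_zero c)
      · exact absurd hc.symm (Fin.succ_ne_zero c)
      · exact absurd hc.symm (Fin.succ_ne_zero c)

end AuxMelonic3
section AuxMelonic4

variable {D : ℕ} (B : PreGraph D) (h : B.Regular) (φ : B.W ≃ B.B) (hD0 : 0 < D)

lemma mG_ext_white (w : B.W) : ∃! ed, (mG B h φ hD0).src ed = Sum.inl w := by
  refine ⟨.inr (.inl w), rfl, ?_⟩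
  rintro (⟨e', s', c'⟩ | w' | e' | e') hs
  · exact nomatch hs
  · rw [mG_src_ext, Sum.inl.injEq] at hs; rw [hs]
  · exact nomatch hs
  · exact nomatch hs

lemma mG_ext_black (b : B.B) : ∃! ed, (mG B h φ hD0).tgt ed = Sum.inl b := by
  have hlast : ¬ ((B.col (rE B h b ⟨D - 1, by omega⟩)).val + 1 < D) := by
    rw [rE_col]; show ¬ (D - 1 + 1 < D); omega
  refine ⟨.inr (.inr (.inr (rE B h b ⟨D - 1, by omega⟩))), ?_, ?_⟩
  · show (mG B h φ hD0).tgt (.inr (.inr (.inr (rE B h b ⟨D - 1, by omega⟩)))) = Sum.inl b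
    rw [mG_tgt_mer_neg B h φ hD0 _ hlast, rE_tgt]
  · rintro (⟨e', s', c'⟩ | w' | e' | e') ht
    · exact nomatch ht
    · exact nomatch ht
    · by_cases hc' : (B.col e').val + 1 < D
      · rw [mG_tgt_spl_pos B h φ hD0 e' hc'] at ht; exact nomatch ht
      · rw [mG_tgt_spl_neg B h φ hD0 e' hc'] at ht; exact nomatch ht
    · by_cases hc' : (B.col e').val + 1 < D
      · rw [mG_tgt_mer_pos B h φ hD0 e' hc'] at ht; exact nomatch ht
      · rw [mG_tgt_mer_neg B h φ hD0 e' hc', Sum.inl.injEq] at ht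
        have : e' = rE B h b ⟨D - 1, by omega⟩ := by
          refine eq_rE B h ht (Fin.ext ?_)
          show (B.col e').val = D - 1
          omega
        rw [this]

lemma mG_isColored : (mG B h φ hD0).IsColored := by
  refine ⟨?_, ?_, ?_, ?_, ?_, ?_⟩
  · rintro (w | ⟨e, s⟩) hw c
    · exact absurd (mG_inl_extW B h φ hD0 w) hw
    · exact mG_int_white B h φ hD0 e s c
  · rintro (b | ⟨e, t⟩) hb c
    · exact absurd (mG_inl_extB B h φ hD0 b) hb
    · exact mG_int_black B h φ hD0 e t c
  · rintro x ⟨w, rfl⟩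
    exact mG_ext_white B h φ hD0 w
  · rintro x ⟨b, rfl⟩
    exact mG_ext_black B h φ hD0 b
  · rintro x ⟨w, rfl⟩ ed hs
    rcases ed with (⟨e', s', c'⟩ | w' | e' | e')
    · exact nomatch hs
    · rfl
    · exact nomatch hs
    · exact nomatch hs
  · rintro x ⟨b, rfl⟩ ed ht
    rcases ed with (⟨e', s', c'⟩ | w' | e' | e')
    · exact nomatch ht
    · exact nomatch ht
    · by_cases hc' : (B.col e').val + 1 < D
      · rw [mG_tgt_spl_pos B h φ hD0 e' hc'] at ht
      · rw [mG_tgt_spl_neg B h φ hD0 e' hc'] at ht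
    · rfl

lemma mG_pillow (e : B.E) (s : Bool) :
    ∃ (k : Fin (D+1)) (w' : (mG B h φ hD0).W) (b b' : (mG B h φ hD0).B),
      k ≠ 0 ∧ (mG B h φ hD0).PillowAt k (Sum.inr (e, s)) w' b b' := by
  refine ⟨(B.col e).succ, .inr (e, !s), .inr (e, s), .inr (e, !s), Fin.succ_ne_zero _,
    ?_, ?_, ?_, ?_⟩
  · rintro hh
    rw [Sum.inr.injEq, Prod.mk.injEq] at hh
    cases s <;> simp at hh
  · rintro hh
    rw [Sum.inr.injEq, Prod.mk.injEq] at hh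
    cases s <;> simp at hh
  · rintro (⟨e₂, s₂, c₂⟩ | w₂ | e₂ | e₂) hs
    · rw [mG_src_pil, Sum.inr.injEq, Prod.mk.injEq] at hs
      obtain ⟨h1, h2⟩ := hs
      constructor
      · intro hcol
        rw [mG_col_pil, ← h1] at hcol
        have hc2 : c₂ = B.col e₂ := Fin.succ_injective _ hcol
        rw [mG_tgt_pil, if_pos hc2, ← h1, ← h2]
      · intro _ hne
        rw [mG_col_pil, ← h1] at hne
        have hc2 : c₂ ≠ B.col e₂ := fun hh => hne (by rw [hh])
        rw [mG_tgt_pil, if_neg hc2, ← h1, ← h2]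
    · exact ⟨fun hcol => absurd hcol.symm (Fin.succ_ne_zero _), fun h0 _ => absurd rfl h0⟩
    · exact ⟨fun hcol => absurd hcol.symm (Fin.succ_ne_zero _), fun h0 _ => absurd rfl h0⟩
    · exact ⟨fun hcol => absurd hcol.symm (Fin.succ_ne_zero _), fun h0 _ => absurd rfl h0⟩
  · rintro (⟨e₂, s₂, c₂⟩ | w₂ | e₂ | e₂) hs
    · rw [mG_src_pil, Sum.inr.injEq, Prod.mk.injEq] at hs
      obtain ⟨h1, h2⟩ := hs
      constructor
      · intro hcol
        rw [mG_col_pil, ← h1] at hcol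
        have hc2 : c₂ = B.col e₂ := Fin.succ_injective _ hcol
        rw [mG_tgt_pil, if_pos hc2, ← h1, ← h2]
      · intro _ hne
        rw [mG_col_pil, ← h1] at hne
        have hc2 : c₂ ≠ B.col e₂ := fun hh => hne (by rw [hh])
        rw [mG_tgt_pil, if_neg hc2, ← h1, h2, Bool.not_not]
    · exact ⟨fun hcol => absurd hcol.symm (Fin.succ_ne_zero _), fun h0 _ => absurd rfl h0⟩
    · exact ⟨fun hcol => absurd hcol.symm (Fin.succ_ne_zero _), fun h0 _ => absurd rfl h0⟩
    · exact ⟨fun hcol => absurd hcol.symm (Fin.succ_ne_zero _), fun h0 _ => absurd rfl h0⟩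

lemma mG_isQuartic (e₀ : B.E) : (mG B h φ hD0).IsQuarticFeyn := by
  refine ⟨mG_isColored B h φ hD0, ?_, ?_⟩
  · rintro (w | ⟨e, s⟩) hw
    · exact absurd (mG_inl_extW B h φ hD0 w) hw
    · exact mG_pillow B h φ hD0 e s
  · refine ⟨.inr (.inr (.inl e₀)), rfl, mG_inr_not_extW B h φ hD0 _, ?_⟩
    by_cases hc : (B.col e₀).val + 1 < D
    · rw [mG_tgt_spl_pos B h φ hD0 e₀ hc]; exact mG_inr_not_extB B h φ hD0 _
    · rw [mG_tgt_spl_neg B h φ hD0 e₀ hc]; exact mG_inr_not_extB B h φ hD0 _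

end AuxMelonic4
section AuxMelonic5

variable {D : ℕ} (B : PreGraph D) (h : B.Regular) (φ : B.W ≃ B.B) (hD0 : 0 < D)

/-- The vertex set of the unique `(0,k+1)`-bicolored path starting at the external
white leg `w` of the graph `mG`. -/
def inSet (w : B.W) (k : Fin D) :
    ((B.W ⊕ (B.E × Bool)) ⊕ (B.B ⊕ (B.E × Bool))) → Prop
  | .inl (.inl w') => w' = w
  | .inl (.inr (e, true)) => B.tgt e = B.tgt (aE B h w k) ∧ k ≤ B.col e
  | .inl (.inr (e, false)) => B.src e = w ∧ B.col e < k
  | .inr (.inl b) => b = B.tgt (aE B h w k)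
  | .inr (.inr (e, true)) => B.src e = w ∧ B.col e ≤ k
  | .inr (.inr (e, false)) => B.tgt e = B.tgt (aE B h w k) ∧ k < B.col e

lemma inSet_edge_iff (w : B.W) (k : Fin D) (ed : (mG B h φ hD0).E)
    (hcol : (mG B h φ hD0).col ed ∈ ({0, Fin.succ k} : Set (Fin (D+1)))) :
    (inSet B h w k (Sum.inl ((mG B h φ hD0).src ed)) ↔
      inSet B h w k (Sum.inr ((mG B h φ hD0).tgt ed))) := by
  have hkD := k.isLt
  rcases ed with (⟨e, s, c⟩ | w' | e | e)
  · -- pillow-internal edge; its color must be k.succ, so c = k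
    have hck : c = k := by
      rcases hcol with h0 | hsucc
      · exact absurd h0 (Fin.succ_ne_zero c)
      · exact Fin.succ_injective _ hsucc
    subst hck
    rw [mG_src_pil, mG_tgt_pil]
    have hcD := (B.col e).isLt
    by_cases hke : c = B.col e
    · rw [if_pos hke]
      cases s
      · -- u' : src e = w ∧ col e < c ; tgt port false : tgt e = b₀ ∧ c < col e
        show (B.src e = w ∧ B.col e < c) ↔ (B.tgt e = B.tgt (aE B h w c) ∧ c < B.col e)
        rw [← hke]
        constructor
        · rintro ⟨-, hlt⟩; exact absurd hlt (lt_irrefl c)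
        · rintro ⟨-, hlt⟩; exact absurd hlt (lt_irrefl c)
      · -- u : tgt e = b₀ ∧ c ≤ col e ; tgt port true : src e = w ∧ col e ≤ c
        show (B.tgt e = B.tgt (aE B h w c) ∧ c ≤ B.col e) ↔ (B.src e = w ∧ B.col e ≤ c)
        rw [← hke]
        constructor
        · rintro ⟨htg, -⟩
          have he : e = rE B h (B.tgt (aE B h w c)) c := eq_rE B h htg hke.symm
          have he2 : aE B h w c = rE B h (B.tgt (aE B h w c)) c :=
            eq_rE B h rfl (aE_col B h w c)
          rw [he, ← he2, aE_src]
          exact ⟨rfl, le_refl c⟩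
        · rintro ⟨hsr, -⟩
          have he : e = aE B h w c := eq_aE B h hsr hke.symm
          rw [he]
          exact ⟨rfl, le_refl c⟩
    · rw [if_neg hke]
      cases s
      · -- u' : src e = w ∧ col e < c ; tgt port true : src e = w ∧ col e ≤ c
        show (B.src e = w ∧ B.col e < c) ↔ (B.src e = w ∧ B.col e ≤ c)
        constructor
        · rintro ⟨hsr, hlt⟩; exact ⟨hsr, le_of_lt hlt⟩
        · rintro ⟨hsr, hle⟩
          exact ⟨hsr, lt_of_le_of_ne hle (fun hh => hke hh.symm)⟩
      · -- u : tgt e = b₀ ∧ c ≤ col e ; tgt port false : tgt e = b₀ ∧ c < col e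
        show (B.tgt e = B.tgt (aE B h w c) ∧ c ≤ B.col e) ↔
          (B.tgt e = B.tgt (aE B h w c) ∧ c < B.col e)
        constructor
        · rintro ⟨htg, hle⟩
          exact ⟨htg, lt_of_le_of_ne hle hke⟩
        · rintro ⟨htg, hlt⟩; exact ⟨htg, le_of_lt hlt⟩
  · -- external white edge
    rw [mG_src_ext, mG_tgt_ext]
    show (w' = w) ↔ (B.src (aE B h w' ⟨0, hD0⟩) = w ∧ B.col (aE B h w' ⟨0, hD0⟩) ≤ k)
    rw [aE_src, aE_col]
    constructor
    · rintro rfl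
      exact ⟨rfl, by rw [Fin.le_def]; exact Nat.zero_le _⟩
    · rintro ⟨rfl, -⟩; rfl
  · -- splitter chain edge
    rw [mG_src_spl]
    have hcD := (B.col e).isLt
    by_cases hc : (B.col e).val + 1 < D
    · rw [mG_tgt_spl_pos B h φ hD0 e hc]
      show (B.src e = w ∧ B.col e < k) ↔
        (B.src (aE B h (B.src e) ⟨(B.col e).val + 1, hc⟩) = w ∧
          B.col (aE B h (B.src e) ⟨(B.col e).val + 1, hc⟩) ≤ k)
      rw [aE_src, aE_col]
      rw [Fin.lt_def, Fin.le_def]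
      show (B.src e = w ∧ (B.col e).val < k.val) ↔ (B.src e = w ∧ (B.col e).val + 1 ≤ k.val)
      constructor <;> (rintro ⟨hs, hv⟩; exact ⟨hs, by omega⟩)
    · rw [mG_tgt_spl_neg B h φ hD0 e hc]
      show (B.src e = w ∧ B.col e < k) ↔
        (B.tgt (rE B h (φ (B.src e)) ⟨0, hD0⟩) = B.tgt (aE B h w k) ∧
          k < B.col (rE B h (φ (B.src e)) ⟨0, hD0⟩))
      rw [rE_col]
      constructor
      · rintro ⟨-, hlt⟩
        rw [Fin.lt_def] at hlt
        omega
      · rintro ⟨-, hlt⟩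
        exact absurd (Fin.lt_def.mp hlt) (Nat.not_lt_zero _)
  · -- merger chain edge
    rw [mG_src_mer]
    have hcD := (B.col e).isLt
    by_cases hc : (B.col e).val + 1 < D
    · rw [mG_tgt_mer_pos B h φ hD0 e hc]
      show (B.tgt e = B.tgt (aE B h w k) ∧ k ≤ B.col e) ↔
        (B.tgt (rE B h (B.tgt e) ⟨(B.col e).val + 1, hc⟩) = B.tgt (aE B h w k) ∧
          k < B.col (rE B h (B.tgt e) ⟨(B.col e).val + 1, hc⟩))
      rw [rE_tgt, rE_col, Fin.le_def, Fin.lt_def]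
      show (B.tgt e = B.tgt (aE B h w k) ∧ k.val ≤ (B.col e).val) ↔
        (B.tgt e = B.tgt (aE B h w k) ∧ k.val < (B.col e).val + 1)
      constructor
      · rintro ⟨htg, hle⟩; exact ⟨htg, by omega⟩
      · rintro ⟨htg, hlt⟩; exact ⟨htg, by omega⟩
    · rw [mG_tgt_mer_neg B h φ hD0 e hc]
      show (B.tgt e = B.tgt (aE B h w k) ∧ k ≤ B.col e) ↔ (B.tgt e = B.tgt (aE B h w k))
      constructor
      · rintro ⟨htg, -⟩; exact htg
      · intro htg
        exact ⟨htg, by rw [Fin.le_def]; omega⟩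

lemma inSet_of_reachable (w : B.W) (k : Fin D) {q}
    (hr : ((mG B h φ hD0).adjOn {0, Fin.succ k}).Reachable (Sum.inl (Sum.inl w)) q) :
    inSet B h w k q := by
  obtain ⟨wk⟩ := hr
  have main : ∀ (p q : (mG B h φ hD0).W ⊕ (mG B h φ hD0).B)
      (_ : ((mG B h φ hD0).adjOn {0, Fin.succ k}).Walk p q),
      inSet B h w k p → inSet B h w k q := by
    intro p q wlk
    induction wlk with
    | nil => exact id
    | cons ha _ ih =>
      intro hp
      refine ih ?_
      obtain ⟨ed, hcol, hor⟩ := ha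
      rcases hor with ⟨h1, h2⟩ | ⟨h1, h2⟩
      · rw [h2]
        rw [h1] at hp
        exact (inSet_edge_iff B h φ hD0 w k ed hcol).1 hp
      · rw [h1]
        rw [h2] at hp
        exact (inSet_edge_iff B h φ hD0 w k ed hcol).2 hp
  exact main _ _ wk rfl

end AuxMelonic5
section AuxMelonic6

variable {D : ℕ} (B : PreGraph D) (h : B.Regular) (φ : B.W ≃ B.B) (hD0 : 0 < D)

lemma aE_congr {w w' : B.W} {c c' : Fin D} (hB : B.Regular) (hw : w = w') (hc : c.val = c'.val) :
    aE B hB w c = aE B hB w' c' := by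
  subst hw; rw [Fin.ext hc]

lemma rE_congr {b b' : B.B} {c c' : Fin D} (hB : B.Regular) (hb : b = b') (hc : c.val = c'.val) :
    rE B hB b c = rE B hB b' c' := by
  subst hb; rw [Fin.ext hc]

lemma mG_adj_edge (S : Set (Fin (D+1))) (ed : (mG B h φ hD0).E)
    (hc : (mG B h φ hD0).col ed ∈ S) :
    ((mG B h φ hD0).adjOn S).Adj (Sum.inl ((mG B h φ hD0).src ed))
      (Sum.inr ((mG B h φ hD0).tgt ed)) :=
  ⟨ed, hc, Or.inl ⟨rfl, rfl⟩⟩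

lemma mem01 (k : Fin D) : (0 : Fin (D+1)) ∈ ({0, Fin.succ k} : Set (Fin (D+1))) :=
  Set.mem_insert _ _

lemma mem02 (k : Fin D) : (Fin.succ k) ∈ ({0, Fin.succ k} : Set (Fin (D+1))) :=
  Set.mem_insert_of_mem _ rfl

lemma mG_reach_split (w : B.W) (k : Fin D) :
    ∀ n (hn : n < D), n ≤ k.val →
      ((mG B h φ hD0).adjOn {0, Fin.succ k}).Reachable (Sum.inl (Sum.inl w))
        (Sum.inr (Sum.inr (aE B h w ⟨n, hn⟩, true))) := by
  intro n
  induction n with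
  | zero =>
    intro hn _
    exact (mG_adj_edge B h φ hD0 _ (.inr (.inl w)) (mem01 k)).reachable
  | succ n ih =>
    intro hn hnk
    have hn' : n < D := by omega
    have hr1 := ih hn' (by omega)
    have hcolX : B.col (aE B h w ⟨n, hn'⟩) = ⟨n, hn'⟩ := aE_col B h w _
    have hkne : ¬ (k = B.col (aE B h w ⟨n, hn'⟩)) := by
      rw [hcolX]
      intro hh
      have hval : k.val = n := congrArg Fin.val hh
      omega
    have had1 := mG_adj_edge B h φ hD0 _ (.inl (aE B h w ⟨n, hn'⟩, false, k)) (mem02 k)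
    rw [mG_src_pil, mG_tgt_pil, if_neg hkne] at had1
    have hcX : (B.col (aE B h w ⟨n, hn'⟩)).val + 1 < D := by rw [hcolX]; exact hn
    have had2 := mG_adj_edge B h φ hD0 _ (.inr (.inr (.inl (aE B h w ⟨n, hn'⟩)))) (mem01 k)
    rw [mG_src_spl, mG_tgt_spl_pos B h φ hD0 _ hcX,
      show aE B h (B.src (aE B h w ⟨n, hn'⟩)) ⟨(B.col (aE B h w ⟨n, hn'⟩)).val + 1, hcX⟩
          = aE B h w ⟨n + 1, hn⟩ from
        aE_congr B h (aE_src B h w _) (by show (B.col (aE B h w ⟨n, hn'⟩)).val + 1 = n + 1; rw [hcolX])] at had2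
    exact hr1.trans (had1.reachable.symm.trans had2.reachable)

lemma mG_reach_merge (b : B.B) (k : Fin D) :
    ∀ m n (hn : n < D), n + m + 1 = D → k.val ≤ n →
      ((mG B h φ hD0).adjOn {0, Fin.succ k}).Reachable
        (Sum.inl (Sum.inr (rE B h b ⟨n, hn⟩, true))) (Sum.inr (Sum.inl b)) := by
  intro m
  induction m with
  | zero =>
    intro n hn hsum hk
    have hcX : ¬ ((B.col (rE B h b ⟨n, hn⟩)).val + 1 < D) := by
      rw [rE_col]; show ¬ (n + 1 < D); omega
    have had := mG_adj_edge B h φ hD0 _ (.inr (.inr (.inr (rE B h b ⟨n, hn⟩)))) (mem01 k)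
    rw [mG_src_mer, mG_tgt_mer_neg B h φ hD0 _ hcX, rE_tgt] at had
    exact had.reachable
  | succ m ih =>
    intro n hn hsum hk
    have hn1 : n + 1 < D := by omega
    have hcX : (B.col (rE B h b ⟨n, hn⟩)).val + 1 < D := by
      rw [rE_col]; show n + 1 < D; omega
    have had1 := mG_adj_edge B h φ hD0 _ (.inr (.inr (.inr (rE B h b ⟨n, hn⟩)))) (mem01 k)
    rw [mG_src_mer, mG_tgt_mer_pos B h φ hD0 _ hcX,
      show rE B h (B.tgt (rE B h b ⟨n, hn⟩)) ⟨(B.col (rE B h b ⟨n, hn⟩)).val + 1, hcX⟩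
          = rE B h b ⟨n + 1, hn1⟩ from
        rE_congr B h (rE_tgt B h b _) (by show (B.col (rE B h b ⟨n, hn⟩)).val + 1 = n + 1; rw [rE_col])] at had1
    have hkne : ¬ (k = B.col (rE B h b ⟨n + 1, hn1⟩)) := by
      rw [rE_col]
      intro hh
      have hval : k.val = n + 1 := congrArg Fin.val hh
      omega
    have had2 := mG_adj_edge B h φ hD0 _ (.inl (rE B h b ⟨n + 1, hn1⟩, true, k)) (mem02 k)
    rw [mG_src_pil, mG_tgt_pil, if_neg hkne] at had2
    exact had1.reachable.trans (had2.reachable.symm.trans (ih (n + 1) hn1 (by omega) (by omega)))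

lemma mG_bAdj_main (w : B.W) (k : Fin D) :
    (mG B h φ hD0).bAdj k (Sum.inl w) (Sum.inl (B.tgt (aE B h w k))) := by
  have h1 := mG_reach_split B h φ hD0 w k k.val k.isLt (le_refl _)
  rw [Fin.eta] at h1
  have hkj : k = B.col (aE B h w k) := (aE_col B h w k).symm
  have hadj := mG_adj_edge B h φ hD0 _ (.inl (aE B h w k, true, k)) (mem02 k)
  rw [mG_src_pil, mG_tgt_pil, if_pos hkj] at hadj
  have h2 := mG_reach_merge B h φ hD0 (B.tgt (aE B h w k)) k (D - 1 - k.val) k.val k.isLt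
    (by have := k.isLt; omega) (le_refl _)
  rw [show rE B h (B.tgt (aE B h w k)) ⟨k.val, k.isLt⟩ = aE B h w k from
    (eq_rE B h rfl (by rw [Fin.eta]; exact aE_col B h w k)).symm] at h2
  exact h1.trans (hadj.reachable.symm.trans h2)

lemma mG_bAdj_iff (w : B.W) (b : B.B) (k : Fin D) :
    (mG B h φ hD0).bAdj k (Sum.inl w) (Sum.inl b) ↔
      ∃ e, B.src e = w ∧ B.tgt e = b ∧ B.col e = k := by
  constructor
  · intro hr
    have hb : b = B.tgt (aE B h w k) := inSet_of_reachable B h φ hD0 w k hr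
    exact ⟨aE B h w k, aE_src B h w k, hb.symm, aE_col B h w k⟩
  · rintro ⟨e, hs, ht, hc⟩
    have he : e = aE B h w k := eq_aE B h hs hc
    rw [← ht, he]
    exact mG_bAdj_main B h φ hD0 w k

noncomputable def fwEquiv : {x // x ∈ (mG B h φ hD0).extW} ≃ B.W :=
  (Equiv.ofInjective Sum.inl Sum.inl_injective).symm

lemma fwEquiv_apply (w : B.W) (hw : Sum.inl w ∈ (mG B h φ hD0).extW) :
    fwEquiv B h φ hD0 ⟨Sum.inl w, hw⟩ = w := by
  have hh : (Equiv.ofInjective (Sum.inl : B.W → B.W ⊕ (B.E × Bool)) Sum.inl_injective) w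
      = ⟨Sum.inl w, hw⟩ := Subtype.ext rfl
  rw [fwEquiv, ← hh]
  exact Equiv.symm_apply_apply _ _

noncomputable def fbEquiv : {y // y ∈ (mG B h φ hD0).extB} ≃ B.B :=
  (Equiv.ofInjective Sum.inl Sum.inl_injective).symm

lemma fbEquiv_apply (b : B.B) (hb : Sum.inl b ∈ (mG B h φ hD0).extB) :
    fbEquiv B h φ hD0 ⟨Sum.inl b, hb⟩ = b := by
  have hh : (Equiv.ofInjective (Sum.inl : B.B → B.B ⊕ (B.E × Bool)) Sum.inl_injective) b
      = ⟨Sum.inl b, hb⟩ := Subtype.ext rfl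
  rw [fbEquiv, ← hh]
  exact Equiv.symm_apply_apply _ _

lemma mG_boundary : (mG B h φ hD0).BoundaryIso B := by
  refine ⟨fwEquiv B h φ hD0, fbEquiv B h φ hD0, ?_⟩
  rintro ⟨x, hx⟩ ⟨y, hy⟩ k
  obtain ⟨w, rfl⟩ := hx
  obtain ⟨b, rfl⟩ := hy
  erw [fwEquiv_apply, fbEquiv_apply]
  exact mG_bAdj_iff B h φ hD0 w b k

end AuxMelonic6
section AuxMelonic7

variable {D : ℕ} (B : PreGraph D) (h : B.Regular) (φ : B.W ≃ B.B) (hD0 : 0 < D)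


lemma psiWB_apply (w : B.W) : psiWB B h hD0 w = B.tgt (aE B h w ⟨0, hD0⟩) := rfl

lemma mG_pillow_reach (hD2 : 2 ≤ D) (e : B.E) (s t : Bool) :
    ((mG B h φ hD0).adjOn Set.univ).Adj (Sum.inl (Sum.inr (e, s)))
      (Sum.inr (Sum.inr (e, t))) := by
  by_cases hts : t = s
  · subst hts
    have had := mG_adj_edge B h φ hD0 Set.univ (.inl (e, t, B.col e)) (Set.mem_univ _)
    rw [mG_src_pil, mG_tgt_pil, if_pos rfl] at had
    exact had
  · have ht : t = !s := by cases s <;> cases t <;> simp_all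
    subst ht
    obtain ⟨c', hc'⟩ : ∃ c' : Fin D, c' ≠ B.col e := by
      by_cases h0 : (B.col e).val = 0
      · refine ⟨⟨1, by omega⟩, fun hh => ?_⟩
        have hv : (1 : ℕ) = (B.col e).val := congrArg Fin.val hh
        omega
      · exact ⟨⟨0, hD0⟩, fun hh => by
          have hv : (0 : ℕ) = (B.col e).val := congrArg Fin.val hh
          omega⟩
    have had := mG_adj_edge B h φ hD0 Set.univ (.inl (e, s, c')) (Set.mem_univ _)
    rw [mG_src_pil, mG_tgt_pil, if_neg hc'] at had
    exact had

lemma mG_reach_xv (hD2 : 2 ≤ D) (w : B.W) :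
    ∀ n (hn : n < D), ((mG B h φ hD0).adjOn Set.univ).Reachable (Sum.inl (Sum.inl w))
      (Sum.inr (Sum.inr (aE B h w ⟨n, hn⟩, true))) := by
  intro n
  induction n with
  | zero =>
    intro hn
    exact (mG_adj_edge B h φ hD0 Set.univ (.inr (.inl w)) (Set.mem_univ _)).reachable
  | succ n ih =>
    intro hn
    have hn' : n < D := by omega
    have hr1 := ih hn'
    have hcolX : B.col (aE B h w ⟨n, hn'⟩) = ⟨n, hn'⟩ := aE_col B h w _
    have hcX : (B.col (aE B h w ⟨n, hn'⟩)).val + 1 < D := by rw [hcolX]; exact hn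
    have had2 := mG_adj_edge B h φ hD0 Set.univ (.inr (.inr (.inl (aE B h w ⟨n, hn'⟩)))) (Set.mem_univ _)
    rw [mG_src_spl, mG_tgt_spl_pos B h φ hD0 _ hcX,
      show aE B h (B.src (aE B h w ⟨n, hn'⟩)) ⟨(B.col (aE B h w ⟨n, hn'⟩)).val + 1, hcX⟩
          = aE B h w ⟨n + 1, hn⟩ from
        aE_congr B h (aE_src B h w _)
          (by show (B.col (aE B h w ⟨n, hn'⟩)).val + 1 = n + 1; rw [hcolX])] at had2
    exact hr1.trans ((mG_pillow_reach B h φ hD0 hD2 _ false true).reachable.symm.trans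
      had2.reachable)

lemma mG_reach_uy (hD2 : 2 ≤ D) (b : B.B) :
    ∀ m n (hn : n < D), n + m + 1 = D →
      ((mG B h φ hD0).adjOn Set.univ).Reachable
        (Sum.inl (Sum.inr (rE B h b ⟨n, hn⟩, true))) (Sum.inr (Sum.inl b)) := by
  intro m
  induction m with
  | zero =>
    intro n hn hsum
    have hcX : ¬ ((B.col (rE B h b ⟨n, hn⟩)).val + 1 < D) := by
      rw [rE_col]; show ¬ (n + 1 < D); omega
    have had := mG_adj_edge B h φ hD0 Set.univ (.inr (.inr (.inr (rE B h b ⟨n, hn⟩)))) (Set.mem_univ _)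
    rw [mG_src_mer, mG_tgt_mer_neg B h φ hD0 _ hcX, rE_tgt] at had
    exact had.reachable
  | succ m ih =>
    intro n hn hsum
    have hn1 : n + 1 < D := by omega
    have hcX : (B.col (rE B h b ⟨n, hn⟩)).val + 1 < D := by
      rw [rE_col]; show n + 1 < D; omega
    have had1 := mG_adj_edge B h φ hD0 Set.univ (.inr (.inr (.inr (rE B h b ⟨n, hn⟩)))) (Set.mem_univ _)
    rw [mG_src_mer, mG_tgt_mer_pos B h φ hD0 _ hcX,
      show rE B h (B.tgt (rE B h b ⟨n, hn⟩)) ⟨(B.col (rE B h b ⟨n, hn⟩)).val + 1, hcX⟩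
          = rE B h b ⟨n + 1, hn1⟩ from
        rE_congr B h (rE_tgt B h b _)
          (by show (B.col (rE B h b ⟨n, hn⟩)).val + 1 = n + 1; rw [rE_col])] at had1
    exact had1.reachable.trans ((mG_pillow_reach B h φ hD0 hD2 _ true false).reachable.symm.trans
      (ih (n + 1) hn1 (by omega)))

lemma mG_reach_xu (hD2 : 2 ≤ D) (e : B.E) :
    ((mG B h φ hD0).adjOn Set.univ).Reachable (Sum.inl (Sum.inl (B.src e)))
      (Sum.inl (Sum.inr (e, true))) := by
  have h1 := mG_reach_xv B h φ hD0 hD2 (B.src e) (B.col e).val (B.col e).isLt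
  rw [show aE B h (B.src e) ⟨(B.col e).val, (B.col e).isLt⟩ = e from by
    rw [Fin.eta]; exact aE_self B h e] at h1
  exact h1.trans (mG_pillow_reach B h φ hD0 hD2 e true true).reachable.symm

lemma mG_reach_xy_psi (hD2 : 2 ≤ D) (w : B.W) :
    ((mG B h φ hD0).adjOn Set.univ).Reachable (Sum.inl (Sum.inl w))
      (Sum.inr (Sum.inl (psiWB B h hD0 w))) := by
  have h2 := mG_reach_uy B h φ hD0 hD2 (psiWB B h hD0 w) (D - 1) 0 hD0 (by omega)
  rw [show rE B h (psiWB B h hD0 w) ⟨0, hD0⟩ = aE B h w ⟨0, hD0⟩ from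
    (eq_rE B h rfl (aE_col B h w _)).symm] at h2
  have h3 := mG_reach_xu B h φ hD0 hD2 (aE B h w ⟨0, hD0⟩)
  rw [aE_src] at h3
  exact h3.trans h2

lemma mG_reach_xy_phi (hD2 : 2 ≤ D) (w : B.W) :
    ((mG B h φ hD0).adjOn Set.univ).Reachable (Sum.inl (Sum.inl w))
      (Sum.inr (Sum.inl (φ w))) := by
  have h1 := mG_reach_xv B h φ hD0 hD2 w (D - 1) (by omega)
  have h4 := (mG_pillow_reach B h φ hD0 hD2 (aE B h w ⟨D - 1, by omega⟩) false true).reachable.symm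
  have hneg : ¬ ((B.col (aE B h w ⟨D - 1, by omega⟩)).val + 1 < D) := by
    rw [aE_col]; show ¬ (D - 1 + 1 < D); omega
  have had := mG_adj_edge B h φ hD0 Set.univ
    (.inr (.inr (.inl (aE B h w ⟨D - 1, by omega⟩)))) (Set.mem_univ _)
  rw [mG_src_spl, mG_tgt_spl_neg B h φ hD0 _ hneg, aE_src] at had
  have h5 := (mG_pillow_reach B h φ hD0 hD2 (rE B h (φ w) ⟨0, hD0⟩) true false).reachable.symm
  have h6 := mG_reach_uy B h φ hD0 hD2 (φ w) (D - 1) 0 hD0 (by omega)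
  exact h1.trans (h4.trans (had.reachable.trans (h5.trans h6)))

lemma mG_reach_to_y (hD2 : 2 ≤ D) (v : (mG B h φ hD0).W ⊕ (mG B h φ hD0).B) :
    ∃ b : B.B, ((mG B h φ hD0).adjOn Set.univ).Reachable v (Sum.inr (Sum.inl b)) := by
  have hx : ∀ w : B.W, ∃ b : B.B, ((mG B h φ hD0).adjOn Set.univ).Reachable
      (Sum.inl (Sum.inl w)) (Sum.inr (Sum.inl b)) :=
    fun w => ⟨psiWB B h hD0 w, mG_reach_xy_psi B h φ hD0 hD2 w⟩
  rcases v with ((w | ⟨e, s⟩) | (b | ⟨e, t⟩))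
  · exact hx w
  · obtain ⟨b, hb⟩ := hx (B.src e)
    exact ⟨b, ((mG_pillow_reach B h φ hD0 hD2 e s true).reachable.trans
      ((mG_pillow_reach B h φ hD0 hD2 e true true).reachable.symm.trans
        ((mG_reach_xu B h φ hD0 hD2 e).symm.trans hb)))⟩
  · exact ⟨b, SimpleGraph.Reachable.refl _⟩
  · obtain ⟨b, hb⟩ := hx (B.src e)
    exact ⟨b, (mG_pillow_reach B h φ hD0 hD2 e true t).reachable.symm.trans
      ((mG_reach_xu B h φ hD0 hD2 e).symm.trans hb)⟩

end AuxMelonic7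
section AuxEmpty

/-- The vacuum Feynman graph (a single pillow with its four half-edges self-glued),
used when `B` is empty. -/
noncomputable def emptyG (D : ℕ) (hD0 : 0 < D) : OpenPre D where
  W := Bool
  B := Bool
  E := (Bool × Fin D) ⊕ Bool
  src := fun x => match x with | .inl (s, _) => s | .inr t => t
  tgt := fun x => match x with
    | .inl (s, c) => if c = ⟨0, hD0⟩ then s else !s
    | .inr t => t
  col := fun x => match x with | .inl (_, c) => c.succ | .inr _ => 0
  extW := ∅
  extB := ∅

attribute [reducible] emptyG

variable (D : ℕ) (hD0 : 0 < D)

lemma emptyG_isColored : (emptyG D hD0).IsColored := by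
  refine ⟨?_, ?_, ?_, ?_, ?_, ?_⟩
  · intro w _ c
    induction c using Fin.cases with
    | zero =>
      refine ⟨.inr w, ⟨rfl, rfl⟩, ?_⟩
      rintro (⟨s', c'⟩ | t') ⟨hs, hc⟩
      · exact absurd hc (Fin.succ_ne_zero c')
      · have ht : t' = w := hs
        rw [ht]
    | succ c =>
      refine ⟨.inl (w, c), ⟨rfl, rfl⟩, ?_⟩
      rintro (⟨s', c'⟩ | t') ⟨hs, hc⟩
      · have hcc : c' = c := Fin.succ_injective _ hc
        have hss : s' = w := hs
        rw [hcc, hss]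
      · exact absurd hc.symm (Fin.succ_ne_zero c)
  · intro b _ c
    induction c using Fin.cases with
    | zero =>
      refine ⟨.inr b, ⟨rfl, rfl⟩, ?_⟩
      rintro (⟨s', c'⟩ | t') ⟨hs, hc⟩
      · exact absurd hc (Fin.succ_ne_zero c')
      · have ht : t' = b := hs
        rw [ht]
    | succ c =>
      refine ⟨.inl (if c = ⟨0, hD0⟩ then b else !b, c), ⟨?_, rfl⟩, ?_⟩
      · show (if c = ⟨0, hD0⟩ then (if c = ⟨0, hD0⟩ then b else !b)
            else !(if c = ⟨0, hD0⟩ then b else !b)) = b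
        by_cases hc0 : c = ⟨0, hD0⟩ <;> simp [hc0]
      · rintro (⟨s', c'⟩ | t') ⟨ht, hc⟩
        · have hcc : c' = c := Fin.succ_injective _ hc
          subst hcc
          have ht' : (if c' = ⟨0, hD0⟩ then s' else !s') = b := ht
          have hss : s' = if c' = ⟨0, hD0⟩ then b else !b := by
            by_cases hc0 : c' = ⟨0, hD0⟩ <;> simp [hc0] at ht' ⊢ <;> simp [← ht']
          rw [hss]
        · exact absurd hc.symm (Fin.succ_ne_zero c)
  · intro w hw; exact absurd hw (Set.notMem_empty w)
  · intro b hb; exact absurd hb (Set.notMem_empty b)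
  · intro w hw; exact absurd hw (Set.notMem_empty w)
  · intro b hb; exact absurd hb (Set.notMem_empty b)

lemma emptyG_isQuartic : (emptyG D hD0).IsQuarticFeyn := by
  refine ⟨emptyG_isColored D hD0, ?_, ?_⟩
  · intro s _
    refine ⟨(⟨0, hD0⟩ : Fin D).succ, !s, s, !s, Fin.succ_ne_zero _, ?_, ?_, ?_, ?_⟩
    · cases s <;> simp
    · cases s <;> simp
    · rintro (⟨s', c'⟩ | t') hs
      · have hss : s' = s := hs
        subst hss
        constructor
        · intro hcol
          have hcc : c' = ⟨0, hD0⟩ := Fin.succ_injective _ hcol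
          show (if c' = ⟨0, hD0⟩ then s' else !s') = s'
          rw [if_pos hcc]
        · intro _ hne
          have hcc : ¬ (c' = ⟨0, hD0⟩) := fun hh => hne (by subst hh; rfl)
          show (if c' = ⟨0, hD0⟩ then s' else !s') = !s'
          rw [if_neg hcc]
      · exact ⟨fun hcol => absurd hcol.symm (Fin.succ_ne_zero _), fun h0 _ => absurd rfl h0⟩
    · rintro (⟨s', c'⟩ | t') hs
      · have hss : s' = !s := hs
        subst hss
        constructor
        · intro hcol
          have hcc : c' = ⟨0, hD0⟩ := Fin.succ_injective _ hcol
          show (if c' = ⟨0, hD0⟩ then !s else !(!s)) = !s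
          rw [if_pos hcc]
        · intro _ hne
          have hcc : ¬ (c' = ⟨0, hD0⟩) := fun hh => hne (by subst hh; rfl)
          show (if c' = ⟨0, hD0⟩ then !s else !(!s)) = s
          rw [if_neg hcc, Bool.not_not]
      · exact ⟨fun hcol => absurd hcol.symm (Fin.succ_ne_zero _), fun h0 _ => absurd rfl h0⟩
  · exact ⟨.inr true, rfl, Set.notMem_empty _, Set.notMem_empty _⟩

lemma emptyG_connected (hD1 : 1 < D) : (emptyG D hD0).Connected := by
  have hadj : ∀ s t : Bool, ((emptyG D hD0).adjOn Set.univ).Adj (Sum.inl s) (Sum.inr t) := by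
    intro s t
    by_cases hts : t = s
    · subst hts
      refine ⟨.inl (t, ⟨0, hD0⟩), Set.mem_univ _, Or.inl ⟨rfl, ?_⟩⟩
      show Sum.inr t = Sum.inr (if (⟨0, hD0⟩ : Fin D) = ⟨0, hD0⟩ then t else !t)
      rw [if_pos rfl]
    · have ht : t = !s := by cases s <;> cases t <;> simp_all
      subst ht
      refine ⟨.inl (s, ⟨1, hD1⟩), Set.mem_univ _, Or.inl ⟨rfl, ?_⟩⟩
      show (Sum.inr !s : (emptyG D hD0).W ⊕ (emptyG D hD0).B) = Sum.inr (if (⟨1, hD1⟩ : Fin D) = ⟨0, hD0⟩ then s else !s)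
      rw [if_neg (fun hh => by have hv : (1 : ℕ) = 0 := congrArg Fin.val hh; omega)]
  haveI : Nonempty ((emptyG D hD0).W ⊕ (emptyG D hD0).B) := ⟨Sum.inl true⟩
  refine ⟨fun u v => ?_⟩
  rcases u with s | t <;> rcases v with s' | t'
  · exact (hadj s true).reachable.trans (hadj s' true).reachable.symm
  · exact (hadj s t').reachable
  · exact (hadj s' t).reachable.symm
  · exact (hadj true t).reachable.symm.trans (hadj true t').reachable

lemma emptyG_boundary {D : ℕ} (hD0 : 0 < D) (B : PreGraph D) (hreg : B.Regular)
    (hW : IsEmpty B.W) : (emptyG D hD0).BoundaryIso B := by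
  have hB : IsEmpty B.B := ⟨fun b => hW.false (B.src (rE B hreg b ⟨0, hD0⟩))⟩
  have hE1 : IsEmpty {x // x ∈ (emptyG D hD0).extW} := ⟨fun x => (Set.notMem_empty _) x.2⟩
  have hE2 : IsEmpty {y // y ∈ (emptyG D hD0).extB} := ⟨fun y => (Set.notMem_empty _) y.2⟩
  exact ⟨Equiv.equivOfIsEmpty _ _, Equiv.equivOfIsEmpty _ _, fun w => hE1.elim w⟩

end AuxEmpty
/-- For arbitrary rank `D ≥ 3`, every (possibly disconnected)
`D`-colored graph is the boundary of some connected Feynman graph of the quartic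
melonic model `φ⁴_{D,m}`: the boundary sector is all of `⨿ Grph_D`. -/
theorem boundary_surjective_quartic_melonic (D : ℕ) (hD : 3 ≤ D)
    (B : PreGraph D) (hreg : B.Regular) :
    ∃ G : OpenPre D, G.IsQuarticFeyn ∧ G.Connected ∧ G.BoundaryIso B := by
  have hD0 : 0 < D := by omega
  have hD2 : 2 ≤ D := by omega
  rcases isEmpty_or_nonempty B.W with hW | hW
  · exact ⟨emptyG D hD0, emptyG_isQuartic D hD0, emptyG_connected D hD0 (by omega),
      emptyG_boundary hD0 B hreg hW⟩
  · obtain ⟨w0⟩ := hW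
    have hBBne : Nonempty B.B := ⟨B.tgt (aE B hreg w0 ⟨0, hD0⟩)⟩
    obtain ⟨nb, ⟨ε⟩⟩ := Finite.exists_equiv_fin B.B
    have hnb : nb ≠ 0 := by
      intro hh
      exact (hh ▸ ε hBBne.some).elim0
    obtain ⟨m, rfl⟩ := Nat.exists_eq_succ_of_ne_zero hnb
    set ψ : B.W ≃ B.B := psiWB B hreg hD0 with hψ
    set τ : B.B ≃ B.B := ε.trans ((Equiv.addRight (1 : Fin (m+1))).trans ε.symm) with hτ
    set φ : B.W ≃ B.B := ψ.trans τ with hφ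
    refine ⟨mG B hreg φ hD0, mG_isQuartic B hreg φ hD0 (aE B hreg w0 ⟨0, hD0⟩), ?_,
      mG_boundary B hreg φ hD0⟩
    have hstep : ∀ b : B.B, ((mG B hreg φ hD0).adjOn Set.univ).Reachable
        (Sum.inr (Sum.inl b)) (Sum.inr (Sum.inl (τ b))) := by
      intro b
      have h1 := mG_reach_xy_psi B hreg φ hD0 hD2 (ψ.symm b)
      have h2 := mG_reach_xy_phi B hreg φ hD0 hD2 (ψ.symm b)
      rw [← hψ, Equiv.apply_symm_apply] at h1
      rw [show φ (ψ.symm b) = τ b from by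
        rw [hφ, Equiv.trans_apply, Equiv.apply_symm_apply]] at h2
      exact h1.symm.trans h2
    have hy : ∀ b b' : B.B, ((mG B hreg φ hD0).adjOn Set.univ).Reachable
        (Sum.inr (Sum.inl b)) (Sum.inr (Sum.inl b')) := by
      have hiter : ∀ (i : ℕ) (hi : i < m + 1),
          ((mG B hreg φ hD0).adjOn Set.univ).Reachable
            (Sum.inr (Sum.inl (ε.symm ⟨0, Nat.succ_pos m⟩)))
            (Sum.inr (Sum.inl (ε.symm ⟨i, hi⟩))) := by
        intro i
        induction i with
        | zero => intro hi; exact .refl _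
        | succ i ih =>
          intro hi
          have hi' : i < m + 1 := by omega
          refine (ih hi').trans ?_
          have hst := hstep (ε.symm ⟨i, hi'⟩)
          rw [show τ (ε.symm ⟨i, hi'⟩) = ε.symm ⟨i + 1, hi⟩ from ?_] at hst
          · exact hst
          · rw [hτ]
            show ε.symm ((Equiv.addRight (1 : Fin (m+1))) (ε (ε.symm ⟨i, hi'⟩))) = _
            rw [Equiv.apply_symm_apply]
            congr 1
            show (⟨i, hi'⟩ : Fin (m+1)) + 1 = ⟨i + 1, hi⟩
            have hm2 : 2 ≤ m + 1 := by omega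
            have h1v : (1 : Fin (m+1)).val = 1 := by
              rw [Fin.val_one']; exact Nat.mod_eq_of_lt hm2
            apply Fin.ext
            rw [Fin.val_add, h1v]
            exact Nat.mod_eq_of_lt hi
      intro b b'
      have h1 := hiter (ε b).val (ε b).isLt
      have h2 := hiter (ε b').val (ε b').isLt
      rw [Fin.eta, Equiv.symm_apply_apply] at h1 h2
      exact h1.symm.trans h2
    haveI : Nonempty ((mG B hreg φ hD0).W ⊕ (mG B hreg φ hD0).B) := ⟨Sum.inl (Sum.inl w0)⟩
    refine ⟨fun u v => ?_⟩
    obtain ⟨b1, hb1⟩ := mG_reach_to_y B hreg φ hD0 hD2 u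
    obtain ⟨b2, hb2⟩ := mG_reach_to_y B hreg φ hD0 hD2 v
    exact hb1.trans ((hy b1 b2).trans hb2.symm)
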